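/- Let n ≥ 1 be an integer, let M be a finite index set with |M| ≤ n, and for each m ∈ M let ℓ_m be an integer with 1 ≤ ℓ_m ≤ n and q^m : ZMod ℓ_m → ℝ such that q^m(k) ≥ 0 for all k and q^m(k₀) = 0 for some k₀ ∈ ZMod ℓ_m. Then Σ_{m ∈ M} (max_{i ∈ ZMod ℓ_m} q^m(i)) ≤ n·√(Σ_{m ∈ M} Φ_{ℓ_m}(q^m)). -/
import Mathlib

/-- The cyclic sum-of-squares potential `Φ_ℓ(q) = Σ_{k ∈ ZMod ℓ} (q k − q (k−1))²`
(summed via the enumeration `k ∈ {0,…,ℓ−1}` of `ZMod ℓ`). -/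
noncomputable def cycPhi (ℓ : ℕ) (q : ZMod ℓ → ℝ) : ℝ :=
  ∑ k ∈ Finset.range ℓ, (q (k : ZMod ℓ) - q ((k : ZMod ℓ) - 1)) ^ 2

lemma sum_range_zmod (ℓ : ℕ) [NeZero ℓ] (g : ZMod ℓ → ℝ) :
    ∑ k ∈ Finset.range ℓ, g (k : ZMod ℓ) = ∑ k : ZMod ℓ, g k := by
  refine Finset.sum_bij' (fun k _ => (k : ZMod ℓ)) (fun k _ => k.val) ?_ ?_ ?_ ?_ ?_
  · intro a _; exact Finset.mem_univ _
  · intro a _; exact Finset.mem_range.mpr a.val_lt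
  · intro a ha; exact ZMod.val_cast_of_lt (Finset.mem_range.mp ha)
  · intro a _; exact ZMod.natCast_zmod_val a
  · intro a _; rfl

lemma telescope (ℓ : ℕ) (q : ZMod ℓ → ℝ) (k₀ : ZMod ℓ) (h0 : q k₀ = 0) :
    ∀ s : ℕ, q (k₀ + (s : ZMod ℓ)) ≤
      ∑ t ∈ Finset.range s, |q (k₀ + (t : ZMod ℓ) + 1) - q (k₀ + (t : ZMod ℓ))| := by
  intro s
  induction s with
  | zero => simp [h0]
  | succ s ih =>
      rw [Finset.sum_range_succ]
      push_cast
      have : q (k₀ + (s : ZMod ℓ) + 1) ≤ q (k₀ + (s : ZMod ℓ)) +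
          |q (k₀ + (s : ZMod ℓ) + 1) - q (k₀ + (s : ZMod ℓ))| := by
        have := le_abs_self (q (k₀ + (s : ZMod ℓ) + 1) - q (k₀ + (s : ZMod ℓ)))
        linarith
      rw [← add_assoc]
      linarith

lemma max_le_sqrt (ℓ : ℕ) (hℓ : 1 ≤ ℓ) (q : ZMod ℓ → ℝ)
    (hnn : ∀ k, 0 ≤ q k) (hz : ∃ k₀, q k₀ = 0) (i : ZMod ℓ) :
    q i ≤ Real.sqrt (ℓ * cycPhi ℓ q) := by
  haveI : NeZero ℓ := ⟨Nat.one_le_iff_ne_zero.mp hℓ⟩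
  obtain ⟨k₀, h0⟩ := hz
  set f : ZMod ℓ → ℝ := fun k => |q k - q (k - 1)| with hf
  -- step 1: q i ≤ ∑ f over univ
  have h1 : q i ≤ ∑ k : ZMod ℓ, f k := by
    have hs := telescope ℓ q k₀ h0 (i - k₀).val
    rw [ZMod.natCast_zmod_val, add_sub_cancel] at hs
    refine hs.trans ?_
    have hrw : ∀ t ∈ Finset.range (i - k₀).val,
        |q (k₀ + (t : ZMod ℓ) + 1) - q (k₀ + (t : ZMod ℓ))| = f (k₀ + (t : ZMod ℓ) + 1) := by
      intro t _; simp [hf]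
    rw [Finset.sum_congr rfl hrw]
    have hinj : Set.InjOn (fun t : ℕ => k₀ + (t : ZMod ℓ) + 1) (Finset.range (i - k₀).val) := by
      intro a ha b hb hab
      have ha' : a < ℓ := lt_of_lt_of_le (Finset.mem_range.mp (by exact_mod_cast ha)) (i - k₀).val_lt.le
      have hb' : b < ℓ := lt_of_lt_of_le (Finset.mem_range.mp (by exact_mod_cast hb)) (i - k₀).val_lt.le
      have : (a : ZMod ℓ) = (b : ZMod ℓ) := by
        simpa using hab
      have := congrArg ZMod.val this
      rwa [ZMod.val_cast_of_lt ha', ZMod.val_cast_of_lt hb'] at this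
    rw [← Finset.sum_image (fun a ha b hb => hinj ha hb)]
    refine Finset.sum_le_sum_of_subset_of_nonneg (Finset.subset_univ _) ?_
    intro k _ _; exact abs_nonneg _
  -- step 2: Cauchy–Schwarz
  have h2 : (∑ k : ZMod ℓ, f k) ^ 2 ≤ ℓ * cycPhi ℓ q := by
    have := sq_sum_le_card_mul_sum_sq (s := (Finset.univ : Finset (ZMod ℓ))) (f := f)
    have hcard : (Finset.univ : Finset (ZMod ℓ)).card = ℓ := by
      simpa using ZMod.card ℓ
    have hphi : ∑ k : ZMod ℓ, f k ^ 2 = cycPhi ℓ q := by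
      rw [cycPhi, sum_range_zmod ℓ (fun k => (q k - q (k - 1)) ^ 2)]
      exact Finset.sum_congr rfl fun k _ => by simp [hf, sq_abs]
    rw [hcard, hphi] at this
    exact this
  have hsumnn : 0 ≤ ∑ k : ZMod ℓ, f k := Finset.sum_nonneg fun k _ => abs_nonneg _
  have h3 := Real.sqrt_le_sqrt h2
  rw [Real.sqrt_sq hsumnn] at h3
  exact h1.trans h3

theorem sum_max_queue_le_sqrt_potential
    (n : ℕ) (hn : 1 ≤ n) (ι : Type) [Fintype ι]
    (hcard : Fintype.card ι ≤ n)
    (ℓ : ι → ℕ) (hℓ1 : ∀ m, 1 ≤ ℓ m) (hℓn : ∀ m, ℓ m ≤ n)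
    (q : ∀ m, ZMod (ℓ m) → ℝ)
    (hnonneg : ∀ m k, 0 ≤ q m k)
    (hzero : ∀ m, ∃ k₀ : ZMod (ℓ m), q m k₀ = 0) :
    ∑ m, (Finset.range (ℓ m)).sup'
        (Finset.nonempty_range_iff.mpr (Nat.one_le_iff_ne_zero.mp (hℓ1 m)))
        (fun k => q m (k : ZMod (ℓ m)))
      ≤ n * Real.sqrt (∑ m, cycPhi (ℓ m) (q m)) := by
  have hphinn : ∀ m, 0 ≤ cycPhi (ℓ m) (q m) := fun m =>
    Finset.sum_nonneg fun k _ => sq_nonneg _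
  have step1 : ∀ m, (Finset.range (ℓ m)).sup'
        (Finset.nonempty_range_iff.mpr (Nat.one_le_iff_ne_zero.mp (hℓ1 m)))
        (fun k => q m (k : ZMod (ℓ m)))
      ≤ Real.sqrt n * Real.sqrt (cycPhi (ℓ m) (q m)) := by
    intro m
    refine Finset.sup'_le _ _ fun k _ => ?_
    have := max_le_sqrt (ℓ m) (hℓ1 m) (q m) (hnonneg m) (hzero m) (k : ZMod (ℓ m))
    refine this.trans ?_
    rw [← Real.sqrt_mul (by positivity)]
    refine Real.sqrt_le_sqrt ?_
    have : (ℓ m : ℝ) ≤ n := by exact_mod_cast hℓn m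
    nlinarith [hphinn m]
  calc ∑ m, (Finset.range (ℓ m)).sup'
        (Finset.nonempty_range_iff.mpr (Nat.one_le_iff_ne_zero.mp (hℓ1 m)))
        (fun k => q m (k : ZMod (ℓ m)))
      ≤ ∑ m, Real.sqrt n * Real.sqrt (cycPhi (ℓ m) (q m)) :=
        Finset.sum_le_sum fun m _ => step1 m
    _ = Real.sqrt n * ∑ m, Real.sqrt (cycPhi (ℓ m) (q m)) := by rw [Finset.mul_sum]
    _ ≤ Real.sqrt n * (Real.sqrt n * Real.sqrt (∑ m, cycPhi (ℓ m) (q m))) := by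
        refine mul_le_mul_of_nonneg_left ?_ (Real.sqrt_nonneg _)
        have h2 : (∑ m, Real.sqrt (cycPhi (ℓ m) (q m))) ^ 2 ≤
            n * ∑ m, cycPhi (ℓ m) (q m) := by
          have hcs := sq_sum_le_card_mul_sum_sq (s := (Finset.univ : Finset ι))
            (f := fun m => Real.sqrt (cycPhi (ℓ m) (q m)))
          have heq : ∑ m, Real.sqrt (cycPhi (ℓ m) (q m)) ^ 2 = ∑ m, cycPhi (ℓ m) (q m) :=
            Finset.sum_congr rfl fun m _ => Real.sq_sqrt (hphinn m)
          rw [heq] at hcs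
          refine hcs.trans ?_
          have h1 : (Fintype.card ι : ℝ) ≤ n := by exact_mod_cast hcard
          have h2 : 0 ≤ ∑ m, cycPhi (ℓ m) (q m) := Finset.sum_nonneg fun m _ => hphinn m
          simpa [Finset.card_univ] using mul_le_mul_of_nonneg_right h1 h2
        have hnn : 0 ≤ ∑ m, Real.sqrt (cycPhi (ℓ m) (q m)) :=
          Finset.sum_nonneg fun m _ => Real.sqrt_nonneg _
        have := Real.sqrt_le_sqrt h2
        rwa [Real.sqrt_sq hnn, Real.sqrt_mul (by positivity)] at this
    _ = n * Real.sqrt (∑ m, cycPhi (ℓ m) (q m)) := by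
        rw [← mul_assoc, Real.mul_self_sqrt (by positivity)]
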